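/- (Berge's theorem.) Let G = (V,E) be a finite undirected graph and M ⊆ E a matching. Then M is a maximum matching (no matching of G has strictly larger cardinality) if and only if there exists no M-augmenting path in G. -/

import Mathlib

variable {V : Type*}

/-- `M` is a matching of the simple graph `G`: a set of edges of `G`,
no two of which share a node. -/
def IsMatchingOn (G : SimpleGraph V) (M : Set (Sym2 V)) : Prop :=
  M ⊆ G.edgeSet ∧ ∀ e ∈ M, ∀ f ∈ M, ∀ v : V, v ∈ e → v ∈ f → e = f

/-- A node is `M`-free if it is incident to no edge of `M`. -/
def MFree (M : Set (Sym2 V)) (v : V) : Prop := ∀ e ∈ M, v ∉ e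

/-- The edges of the vertex list alternate between `M` and its complement;
the Boolean `b` records whether the next edge must belong to `M`. -/
def AlternatesFrom (M : Set (Sym2 V)) : Bool → List V → Prop
  | _, [] => True
  | _, [_] => True
  | b, x :: y :: rest => (s(x, y) ∈ M ↔ b = true) ∧ AlternatesFrom M (!b) (y :: rest)

/-- A vertex list is `M`-alternating if its edges belong alternately to `M`
and to the complement of `M`. -/
def IsAlternating (M : Set (Sym2 V)) (p : List V) : Prop :=
  AlternatesFrom M true p ∨ AlternatesFrom M false p

/-- An `M`-augmenting path in `G`: a simple `M`-alternating path (with at least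
one edge) both of whose endpoints are `M`-free. -/
def IsAugmentingPath (G : SimpleGraph V) (M : Set (Sym2 V)) (p : List V) : Prop :=
  2 ≤ p.length ∧ p.Chain' G.Adj ∧ p.Nodup ∧ IsAlternating M p ∧
    (∀ u, p.head? = some u → MFree M u) ∧ (∀ u, p.getLast? = some u → MFree M u)

lemma alternatesFrom_congr {M M' : Set (Sym2 V)} :
    ∀ {p : List V} {b : Bool}, AlternatesFrom M b p →
      (∀ z ∈ p.zip p.tail, (s(z.1, z.2) ∈ M ↔ s(z.1, z.2) ∈ M')) →
      AlternatesFrom M' b p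
  | [], _, _, _ => trivial
  | [_], _, _, _ => trivial
  | x :: y :: r, b, h, hz => by
    obtain ⟨h1, h2⟩ := h
    refine ⟨?_, alternatesFrom_congr h2 ?_⟩
    · rw [← hz (x, y) (by simp)]; exact h1
    · intro z hzm
      exact hz z (by simpa using Or.inr hzm)

lemma exists_bigger_of_aug [Fintype V] (G : SimpleGraph V) :
    ∀ (n : ℕ) (p : List V) (M : Set (Sym2 V)), p.length ≤ n → IsMatchingOn G M →
      IsAugmentingPath G M p → ∃ M', IsMatchingOn G M' ∧ M'.ncard = M.ncard + 1 := by
  intro n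
  induction n with
  | zero => intro p M hlen hM hp; have := hp.1; omega
  | succ n ih =>
    intro p M hlen hM hp
    obtain ⟨hlen2, hchain, hnodup, halt, hhead, hlast⟩ := hp
    match p, hlen2 with
    | a :: b :: t, _ =>
    have ha : MFree M a := hhead a rfl
    have hGab : G.Adj a b := (List.isChain_cons_cons.mp hchain).1
    have habM : s(a, b) ∉ M := fun h => ha _ h (by simp)
    have halt' : AlternatesFrom M false (a :: b :: t) := by
      rcases halt with h | h
      · exact absurd (h.1.mpr rfl) habM
      · exact h
    match t with
    | [] =>
      -- base case : path [a, b]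
      have hb : MFree M b := hlast b rfl
      refine ⟨insert s(a, b) M, ⟨?_, ?_⟩, ?_⟩
      · intro e he
        rcases he with rfl | he
        · exact G.mem_edgeSet.mpr hGab
        · exact hM.1 he
      · intro e he f hf v hve hvf
        rcases he with rfl | he <;> rcases hf with rfl | hf
        · rfl
        · exfalso; rcases Sym2.mem_iff.mp hve with rfl | rfl
          · exact ha _ hf hvf
          · exact hb _ hf hvf
        · exfalso; rcases Sym2.mem_iff.mp hvf with rfl | rfl
          · exact ha _ he hve
          · exact hb _ he hve
        · exact hM.2 e he f hf v hve hvf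
      · exact Set.ncard_insert_of_notMem habM
    | c :: rest =>
      obtain ⟨hab, halt2⟩ := halt'
      obtain ⟨hbc, halt3⟩ := halt2
      have hbcM : s(b, c) ∈ M := hbc.mpr rfl
      match rest with
      | [] =>
        exfalso
        exact hlast c (by simp) _ hbcM (by simp)
      | d :: rest' =>
        -- inductive step
        have hna : a ∉ b :: c :: d :: rest' := (List.nodup_cons.mp hnodup).1
        have hnodup2 : (b :: c :: d :: rest').Nodup := (List.nodup_cons.mp hnodup).2
        have hnb : b ∉ c :: d :: rest' := (List.nodup_cons.mp hnodup2).1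
        have hnodup3 : (c :: d :: rest').Nodup := (List.nodup_cons.mp hnodup2).2
        set M₂ : Set (Sym2 V) := insert s(a, b) (M \ {s(b, c)}) with hM₂
        have hM₂sub : M₂ ⊆ G.edgeSet := by
          intro e he
          rcases he with rfl | he
          · exact G.mem_edgeSet.mpr hGab
          · exact hM.1 he.1
        have hM₂match : IsMatchingOn G M₂ := by
          refine ⟨hM₂sub, ?_⟩
          intro e he f hf v hve hvf
          have key : ∀ e' ∈ M \ ({s(b, c)} : Set (Sym2 V)), ∀ v' : V, v' ∈ s(a, b) → v' ∉ e' := by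
            intro e' he' v' hv' hv'e
            rcases Sym2.mem_iff.mp hv' with rfl | rfl
            · exact ha _ he'.1 hv'e
            · exact he'.2 (hM.2 _ he'.1 _ hbcM _ hv'e (by simp))
          rcases he with rfl | he <;> rcases hf with rfl | hf
          · rfl
          · exact absurd hvf (key f hf v hve)
          · exact absurd hve (key e he v hvf)
          · exact hM.2 e he.1 f hf.1 v hve hvf
        have hfreeM₂ : ∀ u, u ∈ c :: d :: rest' → MFree M u → MFree M₂ u := by
          intro u hu hfu e he hue
          rcases he with rfl | he
          · rcases Sym2.mem_iff.mp hue with rfl | rfl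
            · exact hna (by exact List.mem_cons_of_mem _ hu)
            · exact hnb hu
          · exact hfu e he.1 hue
        have hfreec : MFree M₂ c := by
          intro e he hce
          rcases he with rfl | he
          · rcases Sym2.mem_iff.mp hce with rfl | rfl
            · exact hna (by simp)
            · exact hnb (by simp)
          · exact he.2 (hM.2 _ he.1 _ hbcM _ hce (by simp))
        have haug2 : IsAugmentingPath G M₂ (c :: d :: rest') := by
          refine ⟨by simp, (List.isChain_cons_cons.mp (List.isChain_cons_cons.mp hchain).2).2,
            hnodup3, ?_, ?_, ?_⟩
          · refine Or.inr (alternatesFrom_congr halt3 ?_)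
            intro z hz
            have hz1 : z.1 ∈ c :: d :: rest' := (List.of_mem_zip hz).1
            have hz2 : z.2 ∈ c :: d :: rest' := List.mem_of_mem_tail (List.of_mem_zip hz).2
            have hea : s(z.1, z.2) ≠ s(a, b) := by
              intro h
              have : a ∈ s(z.1, z.2) := h ▸ (by simp)
              rcases Sym2.mem_iff.mp this with rfl | rfl
              · exact hna (List.mem_cons_of_mem _ hz1)
              · exact hna (List.mem_cons_of_mem _ hz2)
            have heb : s(z.1, z.2) ≠ s(b, c) := by
              intro h
              have : b ∈ s(z.1, z.2) := h ▸ (by simp)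
              rcases Sym2.mem_iff.mp this with rfl | rfl
              · exact hnb hz1
              · exact hnb hz2
            simp [hM₂, hea, heb]
          · intro u hu
            have : u = c := by simpa using hu.symm
            subst this; exact hfreec
          · intro u hu
            have humem : u ∈ c :: d :: rest' := List.mem_of_mem_getLast? hu
            have huM : MFree M u := by
              apply hlast
              rw [List.getLast?_cons_cons, List.getLast?_cons_cons]
              exact hu
            exact hfreeM₂ u humem huM
        have hcard : M₂.ncard = M.ncard := by
          have h1 : s(a, b) ∉ M \ ({s(b, c)} : Set (Sym2 V)) := fun h => habM h.1
          have h2 := Set.ncard_insert_of_notMem h1 (Set.toFinite _)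
          have h3 := Set.ncard_diff_singleton_add_one hbcM (Set.toFinite _)
          rw [hM₂, h2]; omega
        have hlen3 : (c :: d :: rest').length ≤ n := by
          simp only [List.length_cons] at hlen ⊢; omega
        obtain ⟨M', hM'match, hM'card⟩ := ih (c :: d :: rest') M₂ hlen3 hM₂match haug2
        exact ⟨M', hM'match, by omega⟩


/-- Iterated alternating chain: apply `g` at even steps and `f` at odd steps. -/
def chainF (f g : V → V) (v0 : V) : ℕ → V
  | 0 => v0
  | n + 1 => (if n % 2 = 0 then g else f) (chainF f g v0 n)

lemma chainF_succ (f g : V → V) (v0 : V) (n : ℕ) :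
    chainF f g v0 (n + 1) = (if n % 2 = 0 then g else f) (chainF f g v0 n) := rfl

lemma chainF_back {f g : V → V} (hf : ∀ v, f (f v) = v) (hg : ∀ v, g (g v) = v)
    (v0 : V) (n : ℕ) :
    (if n % 2 = 0 then g else f) (chainF f g v0 (n + 1)) = chainF f g v0 n := by
  rw [chainF_succ]
  rcases Nat.mod_two_eq_zero_or_one n with h | h <;> simp [h, hf, hg]

/-- Core injectivity: before the first "dead" index the chain never repeats. -/
lemma chainF_inj {f g : V → V} (hf : ∀ v, f (f v) = v) (hg : ∀ v, g (g v) = v)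
    {v0 : V} (hv0 : f v0 = v0) :
    ∀ j i, i < j → (∀ m, m < j → chainF f g v0 (m + 1) ≠ chainF f g v0 m) →
      chainF f g v0 i ≠ chainF f g v0 j := by
  intro j
  induction j using Nat.strong_induction_on with
  | _ j IH =>
    intro i hij hnd hF
    obtain ⟨j', rfl⟩ : ∃ j', j = j' + 1 := ⟨j - 1, by omega⟩
    rcases Nat.eq_or_lt_of_le (Nat.succ_le_of_lt hij) with hj1 | hgap
    · -- j = i + 1 : immediate deadness contradiction
      refine hnd i (by omega) ?_
      rw [show i + 1 = j' + 1 by omega]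
      exact hF.symm
    have hbackj : (if j' % 2 = 0 then g else f) (chainF f g v0 (j' + 1)) = chainF f g v0 j' :=
      chainF_back hf hg v0 j'
    match i, hgap with
    | 0, hgap =>
      have hj'pos : 1 ≤ j' := by omega
      rcases Nat.mod_two_eq_zero_or_one j' with hp | hp
      · -- F j' = g v0 = F 1
        have h1 : chainF f g v0 j' = g v0 := by
          rw [← hbackj, ← hF]; simp [hp, chainF]
        have h2 : chainF f g v0 1 = g v0 := by simp [chainF]
        rcases Nat.eq_or_lt_of_le hj'pos with h | h
        · -- j' = 1, j = 2 : F 0 = F 2 = f (F 1) so F 1 = f v0 = v0 = F 0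
          refine hnd 0 (by omega) ?_
          have hj2 : chainF f g v0 2 = f (chainF f g v0 1) := by simp [chainF]
          rw [← h] at hF
          have h3 : f (chainF f g v0 1) = chainF f g v0 0 := by rw [← hj2, ← hF]
          have h4 : chainF f g v0 1 = f (chainF f g v0 0) := by rw [← h3, hf]
          show chainF f g v0 1 = chainF f g v0 0
          rw [h4]
          simpa [chainF] using hv0
        · exact IH j' (by omega) 1 h (fun m hm => hnd m (by omega)) (h2.trans h1.symm)
      · -- step j' = f, F j' = f v0 = v0 = F 0
        have h1 : chainF f g v0 j' = f v0 := by
          rw [← hbackj, ← hF]; simp [hp, chainF]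
        have h1' : chainF f g v0 0 = chainF f g v0 j' := by
          rw [h1, hv0]; rfl
        have hj'pos2 : 0 < j' := by omega
        exact IH j' (by omega) 0 hj'pos2 (fun m hm => hnd m (by omega)) h1'
    | (i' + 1), hgap =>
      have hbacki : (if i' % 2 = 0 then g else f) (chainF f g v0 (i' + 1)) = chainF f g v0 i' :=
        chainF_back hf hg v0 i'
      rcases Nat.decEq (i' % 2) (j' % 2) with hne | hpe
      · -- opposite parity: step (i'+1) agrees with step j', so F (i'+2) = F j'
        have h2 : chainF f g v0 (i' + 1 + 1)
            = (if j' % 2 = 0 then g else f) (chainF f g v0 (i' + 1)) := by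
          rw [chainF_succ, show (i' + 1) % 2 = j' % 2 by omega]
        have h3 : chainF f g v0 (i' + 1 + 1) = chainF f g v0 j' := by
          rw [h2, hF]; exact hbackj
        have hle : i' + 1 + 1 ≤ j' := by omega
        rcases Nat.eq_or_lt_of_le hle with h | h
        · omega  -- i'+2 = j' contradicts parity difference
        · exact IH j' (by omega) (i' + 1 + 1) h (fun m hm => hnd m (by omega)) h3
      · -- same parity: F i' = F j'
        have h2 : chainF f g v0 i' = chainF f g v0 j' := by
          rw [← hbacki, ← hbackj, hF, hpe]
        exact IH j' (by omega) i' (by omega) (fun m hm => hnd m (by omega)) h2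


lemma exists_partner {G : SimpleGraph V} {M : Set (Sym2 V)} (hM : IsMatchingOn G M) :
    ∃ f : V → V, (∀ v w, s(v, w) ∈ M → f v = w) ∧ (∀ v, f v ≠ v → s(v, f v) ∈ M) ∧
      (∀ v, f v = v → MFree M v) := by
  classical
  have hne : ∀ {v w : V}, s(v, w) ∈ M → v ≠ w := fun h => (G.mem_edgeSet.mp (hM.1 h)).ne
  refine ⟨fun v => if h : ∃ w, s(v, w) ∈ M then h.choose else v, ?_, ?_, ?_⟩
  · intro v w hvw
    have h : ∃ w, s(v, w) ∈ M := ⟨w, hvw⟩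
    simp only [dif_pos h]
    have hsp := h.choose_spec
    have := hM.2 _ hsp _ hvw v (Sym2.mem_mk_left _ _) (Sym2.mem_mk_left _ _)
    rcases Sym2.eq_iff.mp this with ⟨_, h2⟩ | ⟨h2, h3⟩
    · exact h2
    · exact absurd h2 (hne hvw)
  · intro v hv
    by_cases h : ∃ w, s(v, w) ∈ M
    · simp only [dif_pos h]; exact h.choose_spec
    · exact absurd (dif_neg h) hv
  · intro v hv e he hve
    induction e with
    | _ x y =>
      have h : ∃ w, s(v, w) ∈ M := by
        rcases Sym2.mem_iff.mp hve with rfl | rfl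
        · exact ⟨y, he⟩
        · exact ⟨x, Sym2.eq_swap ▸ he⟩
      simp only [dif_pos h] at hv
      exact hne (hv ▸ h.choose_spec) rfl

lemma ncard_support_eq {G : SimpleGraph V} [Fintype V] {M : Set (Sym2 V)}
    (hM : IsMatchingOn G M) : {v | ¬ MFree M v}.ncard = 2 * M.ncard := by
  classical
  have key : ∀ S : Set (Sym2 V), S.Finite → S ⊆ M →
      {v | ¬ MFree S v}.ncard = 2 * S.ncard := by
    intro S hS
    refine Set.Finite.induction_on (motive := fun S _ => S ⊆ M →
      {v | ¬ MFree S v}.ncard = 2 * S.ncard) S hS ?_ ?_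
    · intro _; simp [MFree]
    · intro a s ha hfin ih
      revert ha
      induction a using Sym2.ind with
      | _ x y =>
        intro ha hsub
        have haM : s(x, y) ∈ M := hsub (Set.mem_insert _ _)
        have hsM : s ⊆ M := (Set.insert_subset_iff.mp hsub).2
        have hxy : x ≠ y := (G.mem_edgeSet.mp (hM.1 haM)).ne
        have hcov : {v | ¬ MFree (insert s(x, y) s) v}
            = ({x, y} : Set V) ∪ {v | ¬ MFree s v} := by
          ext v
          simp only [Set.mem_setOf_eq, Set.mem_union, MFree, not_forall, Classical.not_imp,
            not_not, Set.mem_insert_iff, Set.mem_singleton_iff]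
          constructor
          · rintro ⟨e, rfl | he, hve⟩
            · exact Or.inl (Sym2.mem_iff.mp hve)
            · exact Or.inr ⟨e, he, hve⟩
          · rintro ((rfl | rfl) | ⟨e, he, hve⟩)
            · exact ⟨s(v, y), Or.inl rfl, Sym2.mem_mk_left _ _⟩
            · exact ⟨s(x, v), Or.inl rfl, Sym2.mem_mk_right _ _⟩
            · exact ⟨e, Or.inr he, hve⟩
        have hdisj : Disjoint ({x, y} : Set V) {v | ¬ MFree s v} := by
          rw [Set.disjoint_left]
          rintro v hva hvs
          simp only [Set.mem_setOf_eq, MFree, not_forall, Classical.not_imp, not_not] at hvs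
          obtain ⟨e, hes, hve⟩ := hvs
          have hva' : v ∈ s(x, y) := by
            rcases hva with rfl | rfl
            · exact Sym2.mem_mk_left _ _
            · exact Sym2.mem_mk_right _ _
          exact ha ((hM.2 _ haM _ (hsM hes) v hva' hve) ▸ hes)
        rw [hcov, Set.ncard_union_eq hdisj (Set.toFinite _) (Set.toFinite _),
          Set.ncard_pair hxy, ih hsM, Set.ncard_insert_of_notMem ha (Set.toFinite _)]
        ring
  exact key M (Set.toFinite M) le_rfl


lemma altFrom_range' (M : Set (Sym2 V)) (F : ℕ → V) :
    ∀ (L k : ℕ) (b : Bool),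
      (∀ i, i < L → (s(F (k + i), F (k + i + 1)) ∈ M ↔ (if i % 2 = 0 then b else !b) = true)) →
      AlternatesFrom M b ((List.range' k (L + 1)).map F) := by
  intro L
  induction L with
  | zero =>
    intro k b _
    exact trivial
  | succ L ih =>
    intro k b h
    rw [List.range'_succ, List.map_cons]
    have hrest : AlternatesFrom M (!b) ((List.range' (k + 1) (L + 1)).map F) := by
      apply ih
      intro i hi
      have h2 := h (i + 1) (by omega)
      rcases Nat.mod_two_eq_zero_or_one i with hp | hp
      · rw [show (i + 1) % 2 = 1 by omega] at h2
        simpa [hp, show k + (i + 1) = k + 1 + i by ring, show k + (i + 1) + 1 = k + 1 + i + 1 by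
          ring] using h2
      · rw [show (i + 1) % 2 = 0 by omega] at h2
        simpa [hp, Bool.not_not, show k + (i + 1) = k + 1 + i by ring,
          show k + (i + 1) + 1 = k + 1 + i + 1 by ring] using h2
    rw [List.range'_succ, List.map_cons] at hrest ⊢
    refine ⟨?_, hrest⟩
    have h0 := h 0 (by omega)
    simpa using h0

lemma aug_of_odd {G : SimpleGraph V} {M M' : Set (Sym2 V)}
    (hM : IsMatchingOn G M) (hM' : IsMatchingOn G M')
    {f g : V → V}
    (hfpart : ∀ v w, s(v, w) ∈ M → f v = w) (hfedge : ∀ v, f v ≠ v → s(v, f v) ∈ M)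
    (hffree : ∀ v, f v = v → MFree M v)
    (hgedge : ∀ v, g v ≠ v → s(v, g v) ∈ M')
    (hf2 : ∀ v, f (f v) = v) (hg2 : ∀ v, g (g v) = v)
    {a : V} (hfa : f a = a) {N : ℕ} (hN : N % 2 = 1)
    (hnd : ∀ m, m < N → chainF f g a (m + 1) ≠ chainF f g a m)
    (hdead : chainF f g a (N + 1) = chainF f g a N) :
    IsAugmentingPath G M ((List.range (N + 1)).map (chainF f g a)) := by
  have hedges : ∀ m, m < N → (s(chainF f g a m, chainF f g a (m + 1)) ∈ M ↔ m % 2 = 1) := by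
    intro m hm
    rcases Nat.mod_two_eq_zero_or_one m with hp | hp
    · rw [hp]
      simp only [Nat.zero_ne_one, iff_false]
      intro hin
      have hfm : f (chainF f g a m) = chainF f g a (m + 1) := hfpart _ _ hin
      match m, hp with
      | 0, _ =>
        refine hnd 0 hm ?_
        have : chainF f g a 0 = a := rfl
        rw [← hfm, this]
        exact hfa
      | (m' + 1), hp =>
        have hstep : chainF f g a (m' + 1) = f (chainF f g a m') := by
          rw [chainF_succ, show m' % 2 = 1 by omega]
          simp
        have : chainF f g a (m' + 1 + 1) = chainF f g a m' := by
          rw [← hfm, hstep, hf2]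
        exact chainF_inj hf2 hg2 hfa (m' + 1 + 1) m' (by omega)
          (fun k hk => hnd k (by omega)) this.symm
    · rw [hp]
      simp only [iff_true]
      have hstep : chainF f g a (m + 1) = f (chainF f g a m) := by
        rw [chainF_succ, hp]; simp
      have hne : f (chainF f g a m) ≠ chainF f g a m := by
        rw [← hstep]; exact hnd m hm
      have := hfedge _ hne
      rwa [← hstep] at this
  have hadj : ∀ m, m < N → G.Adj (chainF f g a m) (chainF f g a (m + 1)) := by
    intro m hm
    rcases Nat.mod_two_eq_zero_or_one m with hp | hp
    · have hstep : chainF f g a (m + 1) = g (chainF f g a m) := by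
        rw [chainF_succ, hp]; simp
      have hne : g (chainF f g a m) ≠ chainF f g a m := by
        rw [← hstep]; exact hnd m hm
      have := hM'.1 (hgedge _ hne)
      rw [← hstep] at this
      exact G.mem_edgeSet.mp this
    · exact G.mem_edgeSet.mp (hM.1 ((hedges m hm).mpr hp))
  have hNpos : 1 ≤ N := by omega
  refine ⟨by simp; omega, ?_, ?_, ?_, ?_, ?_⟩
  · exact List.isChain_map _ |>.mpr ((List.isChain_range_succ _ _).mpr hadj)
  · refine List.Nodup.map_on ?_ List.nodup_range
    intro i hi j hj hFij
    simp only [List.mem_range] at hi hj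
    by_contra hne
    rcases lt_or_gt_of_ne hne with h | h
    · exact chainF_inj hf2 hg2 hfa j i h (fun m hm => hnd m (by omega)) hFij
    · exact chainF_inj hf2 hg2 hfa i j h (fun m hm => hnd m (by omega)) hFij.symm
  · refine Or.inr ?_
    rw [List.range_eq_range']
    apply altFrom_range'
    intro i hi
    have := hedges i (by simpa using hi)
    rcases Nat.mod_two_eq_zero_or_one i with hp | hp <;> simp [hp, this]
  · intro u hu
    rw [List.range_succ_eq_map, List.map_cons, List.head?_cons] at hu
    have : u = chainF f g a 0 := by injection hu.symm
    rw [this]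
    exact hffree a hfa
  · intro u hu
    rw [List.range_succ, List.map_append] at hu
    simp only [List.map_cons, List.map_nil, List.getLast?_concat] at hu
    have hu' : u = chainF f g a N := by injection hu.symm
    rw [hu']
    apply hffree
    have hstep : chainF f g a (N + 1) = f (chainF f g a N) := by
      rw [chainF_succ, hN]; simp
    rw [← hstep]
    exact hdead

lemma chain_end_unique {f g : V → V} (hf2 : ∀ v, f (f v) = v) (hg2 : ∀ v, g (g v) = v)
    {a1 a2 : V} (ha1 : f a1 = a1) {N1 N2 : ℕ}
    (hN1 : N1 % 2 = 0) (hN2 : N2 % 2 = 0)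
    (hnd2 : ∀ m, m < N2 → chainF f g a2 (m + 1) ≠ chainF f g a2 m)
    (hw : chainF f g a1 N1 = chainF f g a2 N2) (hle : N1 ≤ N2) : a1 = a2 := by
  have back : ∀ m, m ≤ N1 → chainF f g a1 (N1 - m) = chainF f g a2 (N2 - m) := by
    intro m
    induction m with
    | zero => intro _; simpa using hw
    | succ m ihm =>
      intro hm
      have ih := ihm (by omega)
      have e1 : N1 - m = (N1 - (m + 1)) + 1 := by omega
      have e2 : N2 - m = (N2 - (m + 1)) + 1 := by omega
      have hpar : (N1 - (m + 1)) % 2 = (N2 - (m + 1)) % 2 := by omega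
      have b1 := chainF_back hf2 hg2 a1 (N1 - (m + 1))
      have b2 := chainF_back hf2 hg2 a2 (N2 - (m + 1))
      rw [← e1] at b1
      rw [← e2] at b2
      rw [← b1, ← b2, ih, hpar]
  have hend := back N1 le_rfl
  rw [Nat.sub_self] at hend
  by_cases hEq : N1 = N2
  · rw [hEq, Nat.sub_self] at hend
    exact hend
  · exfalso
    have hlt : N1 < N2 := lt_of_le_of_ne hle hEq
    have ht1 : N2 - N1 = (N2 - N1 - 1) + 1 := by omega
    have hpar : (N2 - N1 - 1) % 2 = 1 := by omega
    have hstep : chainF f g a2 (N2 - N1) = f (chainF f g a2 (N2 - N1 - 1)) := by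
      rw [ht1, chainF_succ, hpar]; simp
    have h1 : chainF f g a2 (N2 - N1) = a1 := by
      rw [← hend]; rfl
    have h2 : chainF f g a2 (N2 - N1 - 1) = chainF f g a2 (N2 - N1) := by
      have := congrArg f h1
      rw [hstep, hf2, ha1] at this
      rw [this, h1]
    refine hnd2 (N2 - N1 - 1) (by omega) ?_
    rw [← ht1]
    exact h2.symm

def chainSpec (f g : V → V) (a : V) (N : ℕ) : Prop :=
  N % 2 = 0 ∧ 0 < N ∧ (∀ m, m < N → chainF f g a (m + 1) ≠ chainF f g a m) ∧
    chainF f g a (N + 1) = chainF f g a N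

lemma card_le_of_no_aug [Fintype V] {G : SimpleGraph V} {M M' : Set (Sym2 V)}
    (hM : IsMatchingOn G M) (hM' : IsMatchingOn G M')
    (hnp : ¬∃ p : List V, IsAugmentingPath G M p) : M'.ncard ≤ M.ncard := by
  classical
  obtain ⟨f, hfpart, hfedge, hffree⟩ := exists_partner hM
  obtain ⟨g, hgpart, hgedge, hgfree⟩ := exists_partner hM'
  have hf2 : ∀ v, f (f v) = v := by
    intro v
    by_cases h : f v = v
    · rw [h, h]
    · exact hfpart _ _ (Sym2.eq_swap ▸ hfedge v h)
  have hg2 : ∀ v, g (g v) = v := by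
    intro v
    by_cases h : g v = v
    · rw [h, h]
    · exact hgpart _ _ (Sym2.eq_swap ▸ hgedge v h)
  have hSf : {v | ¬ MFree M v} = {v | f v ≠ v} := by
    ext v
    simp only [Set.mem_setOf_eq]
    constructor
    · exact fun h hv => h (hffree v hv)
    · exact fun h hfree => hfree _ (hfedge v h) (Sym2.mem_mk_left _ _)
  have hSg : {v | ¬ MFree M' v} = {v | g v ≠ v} := by
    ext v
    simp only [Set.mem_setOf_eq]
    constructor
    · exact fun h hv => h (hgfree v hv)
    · exact fun h hfree => hfree _ (hgedge v h) (Sym2.mem_mk_left _ _)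
  have hex : ∀ a, f a = a → g a ≠ a → ∃ N, chainSpec f g a N := by
    intro a hfa hga
    have hdead : ∃ n, chainF f g a (n + 1) = chainF f g a n := by
      by_contra hcon
      push_neg at hcon
      obtain ⟨i, j, hij, hFij⟩ := Finite.exists_ne_map_eq_of_infinite (chainF f g a)
      rcases lt_or_gt_of_ne hij with h | h
      · exact chainF_inj hf2 hg2 hfa j i h (fun m _ => hcon m) hFij
      · exact chainF_inj hf2 hg2 hfa i j h (fun m _ => hcon m) hFij.symm
    have hdN := Nat.find_spec hdead
    have hndN : ∀ m, m < Nat.find hdead → chainF f g a (m + 1) ≠ chainF f g a m :=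
      fun m hm => Nat.find_min hdead hm
    have hNpos : 0 < Nat.find hdead := by
      rcases Nat.eq_zero_or_pos (Nat.find hdead) with h | h
      · exfalso
        rw [h] at hdN
        have h1 : chainF f g a 1 = g a := by simp [chainF]
        exact hga (h1.symm.trans hdN)
      · exact h
    rcases Nat.mod_two_eq_zero_or_one (Nat.find hdead) with h | h
    · exact ⟨Nat.find hdead, h, hNpos, hndN, hdN⟩
    · exact absurd ⟨_, aug_of_odd hM hM' hfpart hfedge hffree hgedge hf2 hg2 hfa h hndN hdN⟩ hnp
  have hAB : ({v | g v ≠ v} \ {v | f v ≠ v}).ncard ≤ ({v | f v ≠ v} \ {v | g v ≠ v}).ncard := by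
    apply Set.ncard_le_ncard_of_injOn
      (fun a => if h : ∃ N, chainSpec f g a N then chainF f g a (Nat.find h) else a)
    · rintro a ⟨hag, haf⟩
      simp only [Set.mem_setOf_eq] at hag haf
      have hfa : f a = a := not_not.mp haf
      have h := hex a hfa hag
      obtain ⟨hN0, hNpos, hnd, hdead⟩ := Nat.find_spec h
      simp only [dif_pos h]
      have hNpos2 : 2 ≤ Nat.find h := by omega
      constructor
      · show f (chainF f g a (Nat.find h)) ≠ chainF f g a (Nat.find h)
        have hb := chainF_back hf2 hg2 a (Nat.find h - 1)
        rw [show Nat.find h - 1 + 1 = Nat.find h by omega,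
          show (Nat.find h - 1) % 2 = 1 by omega] at hb
        simp only [one_ne_zero, if_false] at hb
        rw [hb]
        intro hcon
        refine hnd (Nat.find h - 1) (by omega) ?_
        rw [show Nat.find h - 1 + 1 = Nat.find h by omega]
        exact hcon.symm
      · show ¬ (g (chainF f g a (Nat.find h)) ≠ chainF f g a (Nat.find h))
        rw [not_not]
        have := hdead
        rw [chainF_succ, hN0] at this
        simpa using this
    · rintro a1 ⟨hag1, haf1⟩ a2 ⟨hag2, haf2⟩ heq
      simp only [Set.mem_setOf_eq] at hag1 haf1 hag2 haf2
      have hfa1 : f a1 = a1 := not_not.mp haf1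
      have hfa2 : f a2 = a2 := not_not.mp haf2
      have h1 := hex a1 hfa1 hag1
      have h2 := hex a2 hfa2 hag2
      simp only [] at heq
      rw [dif_pos h1, dif_pos h2] at heq
      obtain ⟨hN01, hNpos1, hnd1, hdead1⟩ := Nat.find_spec h1
      obtain ⟨hN02, hNpos2, hnd2, hdead2⟩ := Nat.find_spec h2
      rcases le_total (Nat.find h1) (Nat.find h2) with hle | hle
      · exact chain_end_unique hf2 hg2 hfa1 hN01 hN02 hnd2 heq hle
      · exact (chain_end_unique hf2 hg2 hfa2 hN02 hN01 hnd1 heq.symm hle).symm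
  have e1 := Set.ncard_inter_add_ncard_diff_eq_ncard {v | g v ≠ v} {v | f v ≠ v} (Set.toFinite _)
  have e2 := Set.ncard_inter_add_ncard_diff_eq_ncard {v | f v ≠ v} {v | g v ≠ v} (Set.toFinite _)
  rw [Set.inter_comm] at e1
  have hM2 := ncard_support_eq hM
  have hM'2 := ncard_support_eq hM'
  rw [hSf] at hM2
  rw [hSg] at hM'2
  omega


/-- Berge's theorem: a matching `M` of a finite graph `G` is maximum
(no matching has strictly larger cardinality) iff there is no
`M`-augmenting path in `G`. -/
theorem berge [Fintype V] (G : SimpleGraph V) (M : Set (Sym2 V))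
    (hM : IsMatchingOn G M) :
    (∀ M' : Set (Sym2 V), IsMatchingOn G M' → M'.ncard ≤ M.ncard) ↔
      ¬∃ p : List V, IsAugmentingPath G M p := by
  constructor
  · rintro hmax ⟨p, hp⟩
    obtain ⟨M', hM', hc⟩ := exists_bigger_of_aug G p.length p M le_rfl hM hp
    have := hmax M' hM'
    omega
  · intro hnp M' hM'
    exact card_le_of_no_aug hM hM' hnp
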